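/- Let V be a real vector space, B : V × V → ℝ a bilinear form with B(v,v) ≥ 0 for all v ∈ V, and ℓ : V → ℝ a linear functional. Suppose u, ũ ∈ V satisfy B(u,f) = ℓ(f) and B(f,ũ) = ℓ(f) for all f ∈ V, and ℓ(u) > 0. Set ŵ := (u − ũ)/(2ℓ(u)). Then ℓ(ŵ) = 0, and for every f ∈ V with ℓ(f) = 1 one has B(f + ŵ, f − ŵ) ≥ 1/ℓ(u). -/

import Mathlib

/-- Lower-bound half (inequality (2.11)) of the proof of Theorem 2.2: with
`w := (u - ut)/(2 ℓ(u))`, one has `ℓ(w) = 0` and `B(f+w, f-w) ≥ 1/ℓ(u)`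
for every `f` with `ℓ(f) = 1`. -/
theorem stmt4 {V : Type*} [AddCommGroup V] [Module ℝ V]
    (B : V →ₗ[ℝ] V →ₗ[ℝ] ℝ) (hBnonneg : ∀ v : V, 0 ≤ B v v)
    (ℓ : V →ₗ[ℝ] ℝ) (u ut : V)
    (hu : ∀ f : V, B u f = ℓ f) (hut : ∀ f : V, B f ut = ℓ f)
    (hpos : 0 < ℓ u) :
    ℓ ((2 * ℓ u)⁻¹ • (u - ut)) = 0 ∧
    ∀ f : V, ℓ f = 1 →
      1 / ℓ u ≤ B (f + (2 * ℓ u)⁻¹ • (u - ut)) (f - (2 * ℓ u)⁻¹ • (u - ut)) := by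
  have hℓut : ℓ ut = ℓ u := by rw [← hu ut, hut u]
  constructor
  · simp [map_smul, map_sub, hℓut]
  · intro f hf
    set c : ℝ := (2 * ℓ u)⁻¹ with hc
    have hcu : c * (2 * ℓ u) = 1 := by
      rw [hc]; exact inv_mul_cancel₀ (mul_pos two_pos hpos).ne'
    have key := hBnonneg (f - c • (u + ut))
    have h1 : B u u = ℓ u := hu u
    have h2 : B u ut = ℓ u := by rw [hu ut, hℓut]
    have h3 : B ut ut = ℓ u := by rw [hut ut, hℓut]
    have h4 : B f ut = 1 := by rw [hut f, hf]
    have h5 : B u f = 1 := by rw [hu f, hf]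
    simp only [map_add, map_sub, map_smul, LinearMap.add_apply, LinearMap.sub_apply,
      LinearMap.smul_apply, smul_eq_mul, h1, h2, h3, h4, h5] at key ⊢
    have hinv : 1 / ℓ u = 2 * c := by
      rw [hc]; field_simp
    rw [hinv]
    nlinarith [hcu, hpos, sq_nonneg c]
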